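/- arXiv:1810.03892 — 3 statements merged into one kernel-verified Lean document; each statement's English description precedes it below -/
import Mathlib

section
/- Given an inf-sup stable pair (Ṽ, Q̃) with constant β̃ > 0, and the supremizer operator T : Q̃ → Ṽ defined by (Tq, w)_V = b(w, q) for all w ∈ Ṽ, for any subspace Q_R ⊆ Q̃ and any subspace V_R ⊆ Ṽ containing T(Q_R), the reduced inf-sup constant β_R = inf_{q ∈ Q_R, q ≠ 0} sup_{w ∈ V_R, w ≠ 0} b(w,q)/(‖w‖_V ‖q‖_Q) satisfies β_R ≥ β̃ > 0. -/
open scoped InnerProductSpace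

/-- Supremizer enrichment: if `(Ṽ, Q̃)` is inf-sup stable with constant `β̃ > 0` and
`T : Q̃ → Ṽ` is the supremizer operator `(Tq, w)_V = b(w, q)`, then for any subspace
`Q_R` and any subspace `V_R` containing `T(Q_R)`, the reduced inf-sup constant satisfies
`β_R ≥ β̃`, i.e. for every nonzero `q ∈ Q_R` the reduced supremum is at least `β̃`. -/
theorem stmt_2 {V Q : Type*} [NormedAddCommGroup V] [InnerProductSpace ℝ V] [CompleteSpace V]
    [NormedAddCommGroup Q] [InnerProductSpace ℝ Q] [CompleteSpace Q]
    (b : V →ₗ[ℝ] Q →ₗ[ℝ] ℝ) (C : ℝ) (hb : ∀ w q, |b w q| ≤ C * ‖w‖ * ‖q‖)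
    (T : Q → V) (hT : ∀ q w, ⟪T q, w⟫_ℝ = b w q)
    (β : ℝ) (hβ : 0 < β)
    (hinfsup : ∀ q : Q, q ≠ 0 →
      β ≤ sSup {r : ℝ | ∃ w : V, w ≠ 0 ∧ r = b w q / (‖w‖ * ‖q‖)})
    (QR : Submodule ℝ Q) (VR : Submodule ℝ V) (hTQ : ∀ q ∈ QR, T q ∈ VR) :
    ∀ q ∈ QR, q ≠ 0 →
      β ≤ sSup {r : ℝ | ∃ w, w ∈ VR ∧ w ≠ 0 ∧ r = b w q / (‖w‖ * ‖q‖)} := by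
  intro q hq hq0
  have hqn : 0 < ‖q‖ := norm_pos_iff.mpr hq0
  by_cases hT0 : T q = 0
  · exfalso
    have h1 := hinfsup q hq0
    have h2 : sSup {r : ℝ | ∃ w : V, w ≠ 0 ∧ r = b w q / (‖w‖ * ‖q‖)} ≤ 0 := by
      apply Real.sSup_le _ le_rfl
      rintro r ⟨w, hw, rfl⟩
      have hz : b w q = 0 := by rw [← hT, hT0, inner_zero_left]
      simp [hz]
    linarith
  · have hTn : 0 < ‖T q‖ := norm_pos_iff.mpr hT0
    set M := ‖T q‖ / ‖q‖ with hM
    have hbound : ∀ w : V, w ≠ 0 → b w q / (‖w‖ * ‖q‖) ≤ M := by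
      intro w hw
      have hwn : 0 < ‖w‖ := norm_pos_iff.mpr hw
      have h1 : b w q ≤ ‖T q‖ * ‖w‖ := by
        rw [← hT]
        exact real_inner_le_norm _ _
      calc b w q / (‖w‖ * ‖q‖) ≤ (‖T q‖ * ‖w‖) / (‖w‖ * ‖q‖) := by
            apply div_le_div_of_nonneg_right h1 (by positivity) |>.trans_eq rfl
          _ = M := by rw [hM, mul_comm ‖w‖ ‖q‖, mul_div_mul_right _ _ (ne_of_gt hwn)]
    have hMem : M ∈ {r : ℝ | ∃ w, w ∈ VR ∧ w ≠ 0 ∧ r = b w q / (‖w‖ * ‖q‖)} := by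
      refine ⟨T q, hTQ q hq, hT0, ?_⟩
      have hself : b (T q) q = ‖T q‖ ^ 2 := by
        rw [← hT]; exact real_inner_self_eq_norm_sq _
      rw [hself, hM]
      field_simp
    have hβM : β ≤ M := by
      refine le_trans (hinfsup q hq0) (Real.sSup_le ?_ (by positivity))
      rintro r ⟨w, hw, rfl⟩
      exact hbound w hw
    refine le_trans hβM (le_csSup ⟨M, ?_⟩ hMem)
    rintro r ⟨w, _, hw, rfl⟩
    exact hbound w hw
end

section
/- If the pair (Ṽ, Q̃) satisfies the inf-sup condition with constant β̃ > 0 and V_R is spanned by the velocity POD modes φ¹,…,φ^{R_y} together with the supremizers Tψ¹,…,Tψ^{R_p} of a basis ψ¹,…,ψ^{R_p} of Q_R ⊆ Q̃, then the pair (V_R, Q_R) satisfies the inf-sup condition with constant β_R ≥ β̃, independently of the choice of φ¹,…,φ^{R_y}. -/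
open scoped InnerProductSpace

/-- If `(Ṽ, Q̃)` is inf-sup stable with constant `β̃ > 0` and `V_R` is spanned by arbitrary
velocity POD modes `φⁱ ∈ Ṽ` together with the supremizers `Tψ¹,…,Tψ^{R_p}` of a basis of
`Q_R ⊆ Q̃`, then `(V_R, Q_R)` is inf-sup stable with constant `β_R ≥ β̃`, independently of
the choice of the `φⁱ`. -/
theorem stmt_16 {V Q : Type*} [NormedAddCommGroup V] [InnerProductSpace ℝ V] [CompleteSpace V]
    [NormedAddCommGroup Q] [InnerProductSpace ℝ Q] [CompleteSpace Q]
    (b : V →ₗ[ℝ] Q →ₗ[ℝ] ℝ) (C : ℝ) (hb : ∀ w q, |b w q| ≤ C * ‖w‖ * ‖q‖)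
    (Vt : Submodule ℝ V) (Qt : Submodule ℝ Q)
    (T : Q → V) (hTmem : ∀ q ∈ Qt, T q ∈ Vt)
    (hT : ∀ q ∈ Qt, ∀ w ∈ Vt, ⟪T q, w⟫_ℝ = b w q)
    (β : ℝ) (hβ : 0 < β)
    (hinfsup : ∀ q ∈ Qt, q ≠ 0 →
      β ≤ sSup {r : ℝ | ∃ w, w ∈ Vt ∧ w ≠ 0 ∧ r = b w q / (‖w‖ * ‖q‖)})
    {Ry Rp : ℕ} (φ : Fin Ry → V) (hφ : ∀ i, φ i ∈ Vt)
    (ψ : Fin Rp → Q) (hψ : ∀ i, ψ i ∈ Qt) :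
    ∀ q ∈ Submodule.span ℝ (Set.range ψ), q ≠ 0 →
      β ≤ sSup {r : ℝ | ∃ w,
        w ∈ Submodule.span ℝ (Set.range φ ∪ Set.range (fun i => T (ψ i))) ∧
        w ≠ 0 ∧ r = b w q / (‖w‖ * ‖q‖)} := by
  intro q hq hq0
  obtain ⟨c, hc⟩ := (Submodule.mem_span_range_iff_exists_fun ℝ).1 hq
  have hqQt : q ∈ Qt := by
    rw [← hc]; exact Submodule.sum_mem _ fun i _ => Submodule.smul_mem _ _ (hψ i)
  set w : V := ∑ i, c i • T (ψ i) with hw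
  have hwVt : w ∈ Vt :=
    Submodule.sum_mem _ fun i _ => Submodule.smul_mem _ _ (hTmem _ (hψ i))
  have hwspan : w ∈ Submodule.span ℝ (Set.range φ ∪ Set.range (fun i => T (ψ i))) := by
    refine Submodule.sum_mem _ fun i _ => Submodule.smul_mem _ _ ?_
    exact Submodule.subset_span (Set.mem_union_right _ ⟨i, rfl⟩)
  have key : ∀ v ∈ Vt, ⟪w, v⟫_ℝ = b v q := by
    intro v hv
    rw [hw, sum_inner, ← hc, map_sum]
    refine Finset.sum_congr rfl fun i _ => ?_
    rw [real_inner_smul_left, hT _ (hψ i) _ hv, map_smul, smul_eq_mul]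
  have hq0' : (0:ℝ) < ‖q‖ := norm_pos_iff.2 hq0
  set S : Set ℝ := {r : ℝ | ∃ v, v ∈ Vt ∧ v ≠ 0 ∧ r = b v q / (‖v‖ * ‖q‖)} with hS
  have hβS : β ≤ sSup S := hinfsup q hqQt hq0
  have hSne : S.Nonempty := by
    by_contra h
    rw [Set.not_nonempty_iff_eq_empty] at h
    rw [h, Real.sSup_empty] at hβS
    linarith
  have hub : ∀ r ∈ S, r ≤ ‖w‖ / ‖q‖ := by
    rintro r ⟨v, hv, hv0, rfl⟩
    have hv0' : (0:ℝ) < ‖v‖ := norm_pos_iff.2 hv0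
    have h1 : b v q ≤ ‖w‖ * ‖v‖ := by
      rw [← key v hv]; exact real_inner_le_norm w v
    have h2 : b v q / (‖v‖ * ‖q‖) ≤ (‖w‖ * ‖v‖) / (‖v‖ * ‖q‖) :=
      div_le_div_of_nonneg_right h1 (by positivity)
    refine h2.trans_eq ?_
    field_simp
  have hβw : β ≤ ‖w‖ / ‖q‖ := le_trans hβS (csSup_le hSne hub)
  have hw0 : w ≠ 0 := by
    intro h
    rw [h, norm_zero, zero_div] at hβw
    linarith
  have hw0' : (0:ℝ) < ‖w‖ := norm_pos_iff.2 hw0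
  have hbww : b w q = ‖w‖ ^ 2 := by
    rw [← key w hwVt, real_inner_self_eq_norm_sq]
  have hmem : ‖w‖ / ‖q‖ ∈ {r : ℝ | ∃ w',
      w' ∈ Submodule.span ℝ (Set.range φ ∪ Set.range (fun i => T (ψ i))) ∧
      w' ≠ 0 ∧ r = b w' q / (‖w'‖ * ‖q‖)} := by
    refine ⟨w, hwspan, hw0, ?_⟩
    rw [hbww]
    field_simp
  have hbdd : BddAbove {r : ℝ | ∃ w',
      w' ∈ Submodule.span ℝ (Set.range φ ∪ Set.range (fun i => T (ψ i))) ∧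
      w' ≠ 0 ∧ r = b w' q / (‖w'‖ * ‖q‖)} := by
    refine ⟨C, ?_⟩
    rintro r ⟨v, _, hv0, rfl⟩
    have hv0' : (0:ℝ) < ‖v‖ := norm_pos_iff.2 hv0
    rw [div_le_iff₀ (by positivity)]
    calc b v q ≤ |b v q| := le_abs_self _
      _ ≤ C * ‖v‖ * ‖q‖ := hb v q
      _ = C * (‖v‖ * ‖q‖) := by ring
  exact le_trans hβw (le_csSup hbdd hmem)
end

section
/- For weights α₁,…,αₙ = Δt > 0, the POD objective over orthonormal systems of size R in a finite-dimensional snapshot span is minimized by eigenvectors of the weighted correlation operator K : X → X, Ku = Σⱼ αⱼ (uʲ, u)_X uʲ, corresponding to its R largest eigenvalues, and the minimal value equals Σ_{i>R} λᵢ, the sum of the remaining eigenvalues. -/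
open scoped InnerProductSpace

lemma aux_proj {X : Type*} [NormedAddCommGroup X] [InnerProductSpace ℝ X] {R : ℕ}
    {w : Fin R → X} (hw : Orthonormal ℝ w) (v : X) :
    ‖v - ∑ i, ⟪v, w i⟫_ℝ • w i‖ ^ 2 = ‖v‖ ^ 2 - ∑ i, ⟪v, w i⟫_ℝ ^ 2 := by
  have h1 : ⟪v, ∑ i, ⟪v, w i⟫_ℝ • w i⟫_ℝ = ∑ i, ⟪v, w i⟫_ℝ ^ 2 := by
    rw [inner_sum]
    refine Finset.sum_congr rfl fun i _ => ?_
    rw [real_inner_smul_right]; ring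
  have h2 : ‖∑ i, ⟪v, w i⟫_ℝ • w i‖ ^ 2 = ∑ i, ⟪v, w i⟫_ℝ ^ 2 := by
    rw [← real_inner_self_eq_norm_sq, inner_sum]
    refine Finset.sum_congr rfl fun i _ => ?_
    rw [real_inner_smul_right, hw.inner_left_fintype]
    simp; ring
  rw [norm_sub_sq_real, h1, h2]; ring

lemma aux_cast {N R : ℕ} (hRN : R ≤ N) (f : Fin N → ℝ) :
    ∑ i : Fin R, f (Fin.castLE hRN i) = ∑ k : Fin N, if (k : ℕ) < R then f k else 0 := by
  rcases Nat.eq_zero_or_pos R with h | h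
  · subst h; simp
  rw [← Finset.sum_filter]
  have key : ∑ k ∈ Finset.univ.filter (fun k : Fin N => (k:ℕ) < R), f k
      = ∑ i : Fin R, f (Fin.castLE hRN i) := by
    refine Finset.sum_nbij' (i := fun k => (⟨(k : ℕ) % R, Nat.mod_lt _ h⟩ : Fin R))
      (j := fun i => Fin.castLE hRN i) ?_ ?_ ?_ ?_ ?_
    · intro a _; simp
    · intro a ha; simp at ha; simp [ha]
    · intro a ha; simp at ha; ext; simp [Nat.mod_eq_of_lt ha]
    · intro a _; ext; simp [Nat.mod_eq_of_lt a.isLt]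
    · intro a ha; simp at ha; congr 1; ext; simp [Nat.mod_eq_of_lt ha]
  exact key.symm

lemma aux_comb {N R : ℕ} (lam : Fin N → ℝ) (hlam : Antitone lam) (hnn : ∀ k, 0 ≤ lam k)
    (t : Fin N → ℝ) (ht0 : ∀ k, 0 ≤ t k) (ht1 : ∀ k, t k ≤ 1)
    (hsum : ∑ k, t k ≤ R) :
    ∑ k : Fin N, lam k * t k ≤ ∑ k : Fin N, if (k : ℕ) < R then lam k else 0 := by
  rcases le_or_gt N R with hNR | hRN
  · calc ∑ k : Fin N, lam k * t k ≤ ∑ k : Fin N, lam k * 1 :=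
          Finset.sum_le_sum fun k _ => mul_le_mul_of_nonneg_left (ht1 k) (hnn k)
      _ = ∑ k : Fin N, if (k : ℕ) < R then lam k else 0 := by
          refine Finset.sum_congr rfl fun k _ => ?_
          rw [if_pos (lt_of_lt_of_le k.isLt hNR)]; ring
  · set μ := lam ⟨R, hRN⟩ with hμ
    have hcard : ∑ k : Fin N, (if (k : ℕ) < R then (1:ℝ) else 0) = R := by
      rw [← aux_cast hRN.le (fun _ => (1:ℝ))]
      simp
    have key : ∀ k : Fin N, lam k * t k - (if (k:ℕ) < R then lam k else 0)
        ≤ μ * (t k - if (k:ℕ) < R then 1 else 0) := by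
      intro k
      by_cases h : (k:ℕ) < R
      · rw [if_pos h, if_pos h]
        have hk : μ ≤ lam k := hlam (by simp [Fin.le_def]; omega)
        nlinarith [ht1 k]
      · rw [if_neg h, if_neg h]
        have hk : lam k ≤ μ := hlam (by simp [Fin.le_def]; omega)
        nlinarith [ht0 k]
    have h2 := Finset.sum_le_sum (fun k (_ : k ∈ Finset.univ) => key k)
    rw [Finset.sum_sub_distrib] at h2
    have h3 : ∑ k : Fin N, μ * (t k - if (k:ℕ) < R then 1 else 0)
        = μ * ((∑ k : Fin N, t k) - R) := by
      rw [← Finset.mul_sum, Finset.sum_sub_distrib, hcard]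
    rw [h3] at h2
    have h4 : μ * ((∑ k : Fin N, t k) - R) ≤ 0 :=
      mul_nonpos_of_nonneg_of_nonpos (hnn _) (by linarith)
    linarith


/-- POD optimality: with weights `αⱼ = Δt > 0`, the POD objective over orthonormal systems
of size `R` is minimized by eigenvectors of the weighted correlation operator
`Ku = Σⱼ αⱼ (uʲ, u) uʲ` corresponding to its `R` largest eigenvalues (an antitone
orthonormal eigensystem spanning the snapshots), and the minimal value equals the sum of
the remaining eigenvalues. -/
theorem stmt_17 {X : Type*} [NormedAddCommGroup X] [InnerProductSpace ℝ X]
    {n N R : ℕ} (hRN : R ≤ N) (u : Fin n → X)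
    (Δt : ℝ) (hΔt : 0 < Δt) (α : Fin n → ℝ) (hα : ∀ j, α j = Δt)
    (e : Fin N → X) (he : ∀ i j, ⟪e i, e j⟫_ℝ = if i = j then (1 : ℝ) else 0)
    (lam : Fin N → ℝ) (hlam : Antitone lam)
    (heig : ∀ i, (∑ j, α j • (⟪u j, e i⟫_ℝ • u j)) = lam i • e i)
    (hspan : ∀ j, u j ∈ Submodule.span ℝ (Set.range e)) :
    (∀ φ : Fin R → X, (∀ i j, ⟪φ i, φ j⟫_ℝ = if i = j then (1 : ℝ) else 0) →
      ∑ j, α j * ‖u j - ∑ i : Fin R, ⟪u j, e (Fin.castLE hRN i)⟫_ℝ • e (Fin.castLE hRN i)‖ ^ 2 ≤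
      ∑ j, α j * ‖u j - ∑ i : Fin R, ⟪u j, φ i⟫_ℝ • φ i‖ ^ 2) ∧
    ∑ j, α j * ‖u j - ∑ i : Fin R, ⟪u j, e (Fin.castLE hRN i)⟫_ℝ • e (Fin.castLE hRN i)‖ ^ 2 =
      ∑ i : Fin N, if R ≤ (i : ℕ) then lam i else 0 := by
  have hoe : Orthonormal ℝ e := orthonormal_iff_ite.mpr he
  set c : Fin n → Fin N → ℝ := fun j k => ⟪u j, e k⟫_ℝ with hc
  -- expansion of snapshots
  have hA : ∀ j, u j = ∑ k, c j k • e k := by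
    intro j
    obtain ⟨d, hd⟩ := (Submodule.mem_span_range_iff_exists_fun ℝ).mp (hspan j)
    have hck : ∀ k, c j k = d k := by
      intro k
      simp only [hc, ← hd]
      simpa using hoe.inner_left_fintype d k
    rw [← hd]
    exact Finset.sum_congr rfl fun k _ => by rw [hck k]
  -- eigen-relations in coordinates
  have hB : ∀ i k : Fin N, (∑ j, Δt * (c j i * c j k)) = if i = k then lam i else 0 := by
    intro i k
    have h := congrArg (fun x => ⟪x, e k⟫_ℝ) (heig i)
    rw [sum_inner, real_inner_smul_left] at h
    have h2 : ∀ j, ⟪α j • (⟪u j, e i⟫_ℝ • u j), e k⟫_ℝ = Δt * (c j i * c j k) := by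
      intro j
      rw [real_inner_smul_left, real_inner_smul_left, hα j]
    rw [Finset.sum_congr rfl fun j _ => h2 j] at h
    rw [h, he i k]
    by_cases hik : i = k <;> simp [hik]
  have hnn : ∀ i, 0 ≤ lam i := by
    intro i
    have h := hB i i
    rw [if_pos rfl] at h
    rw [← h]
    exact Finset.sum_nonneg fun j _ => mul_nonneg hΔt.le (mul_self_nonneg _)
  -- Parseval for snapshots
  have hnorm : ∀ j, ‖u j‖ ^ 2 = ∑ k, (c j k) ^ 2 := by
    intro j
    conv_lhs => rw [hA j]
    rw [← real_inner_self_eq_norm_sq, sum_inner]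
    refine Finset.sum_congr rfl fun k _ => ?_
    rw [real_inner_smul_left, hoe.inner_right_fintype]
    ring
  -- total energy
  have htot : ∑ j, Δt * ‖u j‖ ^ 2 = ∑ k, lam k := by
    calc ∑ j, Δt * ‖u j‖ ^ 2 = ∑ j, ∑ k, Δt * (c j k * c j k) := by
          refine Finset.sum_congr rfl fun j _ => ?_
          rw [hnorm j, Finset.mul_sum]
          exact Finset.sum_congr rfl fun k _ => by ring
      _ = ∑ k, ∑ j, Δt * (c j k * c j k) := Finset.sum_comm
      _ = ∑ k, lam k := by
          refine Finset.sum_congr rfl fun k _ => ?_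
          rw [hB k k, if_pos rfl]
  -- objective formula for any orthonormal system
  have hobj : ∀ (w : Fin R → X), Orthonormal ℝ w →
      ∑ j, α j * ‖u j - ∑ i : Fin R, ⟪u j, w i⟫_ℝ • w i‖ ^ 2
        = (∑ k, lam k) - ∑ i : Fin R, ∑ j, Δt * ⟪u j, w i⟫_ℝ ^ 2 := by
    intro w hw
    calc ∑ j, α j * ‖u j - ∑ i : Fin R, ⟪u j, w i⟫_ℝ • w i‖ ^ 2
        = ∑ j, (Δt * ‖u j‖ ^ 2 - ∑ i : Fin R, Δt * ⟪u j, w i⟫_ℝ ^ 2) := by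
          refine Finset.sum_congr rfl fun j _ => ?_
          rw [hα j, aux_proj hw (u j), mul_sub, Finset.mul_sum]
      _ = (∑ j, Δt * ‖u j‖ ^ 2) - ∑ j, ∑ i : Fin R, Δt * ⟪u j, w i⟫_ℝ ^ 2 :=
          Finset.sum_sub_distrib _ _
      _ = (∑ k, lam k) - ∑ i : Fin R, ∑ j, Δt * ⟪u j, w i⟫_ℝ ^ 2 := by
          rw [htot, Finset.sum_comm]
  have hwe : Orthonormal ℝ (fun i : Fin R => e (Fin.castLE hRN i)) :=
    hoe.comp _ (Fin.castLE_injective hRN)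
  -- value on the eigensystem
  have hval : ∑ j, α j * ‖u j - ∑ i : Fin R, ⟪u j, e (Fin.castLE hRN i)⟫_ℝ • e (Fin.castLE hRN i)‖ ^ 2
      = (∑ k, lam k) - ∑ k : Fin N, if (k : ℕ) < R then lam k else 0 := by
    rw [hobj _ hwe, ← aux_cast hRN lam]
    congr 1
    refine Finset.sum_congr rfl fun i _ => ?_
    have := hB (Fin.castLE hRN i) (Fin.castLE hRN i)
    rw [if_pos rfl] at this
    rw [← this]
    exact Finset.sum_congr rfl fun j _ => by rw [hc]; ring
  constructor
  · -- optimality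
    intro φ hφ
    have hwφ : Orthonormal ℝ φ := orthonormal_iff_ite.mpr hφ
    rw [hval, hobj φ hwφ]
    have hkey : ∑ i : Fin R, ∑ j, Δt * ⟪u j, φ i⟫_ℝ ^ 2
        ≤ ∑ k : Fin N, if (k : ℕ) < R then lam k else 0 := by
      set b : Fin R → Fin N → ℝ := fun i k => ⟪e k, φ i⟫_ℝ with hb
      have hexp : ∀ j i, ⟪u j, φ i⟫_ℝ = ∑ k, c j k * b i k := by
        intro j i
        conv_lhs => rw [hA j]
        rw [sum_inner]
        exact Finset.sum_congr rfl fun k _ => by rw [real_inner_smul_left]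
      have hGi : ∀ i : Fin R, ∑ j, Δt * ⟪u j, φ i⟫_ℝ ^ 2 = ∑ k, lam k * (b i k) ^ 2 := by
        intro i
        calc ∑ j, Δt * ⟪u j, φ i⟫_ℝ ^ 2
            = ∑ j, ∑ k, ∑ l, (b i k * b i l) * (Δt * (c j k * c j l)) := by
              refine Finset.sum_congr rfl fun j _ => ?_
              rw [hexp j i, sq, Finset.sum_mul_sum, Finset.mul_sum]
              refine Finset.sum_congr rfl fun k _ => ?_
              rw [Finset.mul_sum]
              exact Finset.sum_congr rfl fun l _ => by ring
          _ = ∑ k, ∑ l, (b i k * b i l) * ∑ j, Δt * (c j k * c j l) := by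
              rw [Finset.sum_comm]
              refine Finset.sum_congr rfl fun k _ => ?_
              rw [Finset.sum_comm]
              refine Finset.sum_congr rfl fun l _ => ?_
              rw [Finset.mul_sum]
          _ = ∑ k, lam k * (b i k) ^ 2 := by
              refine Finset.sum_congr rfl fun k _ => ?_
              rw [Finset.sum_eq_single k]
              · rw [hB k k, if_pos rfl]; ring
              · intro l _ hl
                rw [hB k l, if_neg (fun h => hl h.symm), mul_zero]
              · intro h; exact absurd (Finset.mem_univ k) h
      set t : Fin N → ℝ := fun k => ∑ i : Fin R, (b i k) ^ 2 with ht
      have hsw : ∑ i : Fin R, ∑ j, Δt * ⟪u j, φ i⟫_ℝ ^ 2 = ∑ k, lam k * t k := by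
        rw [Finset.sum_congr rfl fun i _ => hGi i, Finset.sum_comm]
        refine Finset.sum_congr rfl fun k _ => ?_
        rw [ht, Finset.mul_sum]
      rw [hsw]
      refine aux_comb lam hlam hnn t (fun k => Finset.sum_nonneg fun i _ => sq_nonneg _) ?_ ?_
      · intro k
        have hB1 := hwφ.sum_inner_products_le (s := Finset.univ) (e k)
        have hek : ‖e k‖ ^ 2 = 1 := by
          rw [← real_inner_self_eq_norm_sq, he k k, if_pos rfl]
        rw [hek] at hB1
        refine le_trans (le_of_eq ?_) hB1
        refine Finset.sum_congr rfl fun i _ => ?_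
        rw [hb, Real.norm_eq_abs, sq_abs, real_inner_comm]
      · have hB2 : ∀ i : Fin R, ∑ k, (b i k) ^ 2 ≤ 1 := by
          intro i
          have := hoe.sum_inner_products_le (s := Finset.univ) (φ i)
          have hφi : ‖φ i‖ ^ 2 = 1 := by
            rw [← real_inner_self_eq_norm_sq, hφ i i, if_pos rfl]
          rw [hφi] at this
          refine le_trans (le_of_eq ?_) this
          refine Finset.sum_congr rfl fun k _ => ?_
          rw [hb, Real.norm_eq_abs, sq_abs]
        calc ∑ k, t k = ∑ i : Fin R, ∑ k, (b i k) ^ 2 := Finset.sum_comm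
          _ ≤ ∑ i : Fin R, (1 : ℝ) := Finset.sum_le_sum fun i _ => hB2 i
          _ = R := by simp
    linarith
  · -- value
    rw [hval]
    rw [← Finset.sum_sub_distrib]
    refine Finset.sum_congr rfl fun k _ => ?_
    by_cases h : (k : ℕ) < R
    · rw [if_pos h, if_neg (by omega), sub_self]
    · rw [if_neg h, if_pos (by omega), sub_zero]
end
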